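/- In the rSNR-degraded phase-fading HD-MRC, suppose node B+1 always listens under schedule p (i.e., p assigns zero probability to states where node B+1 transmits). Then the reception rate of node B+2 satisfies r_{B+2}(p) ≤ Σ_s p(s) Γ( (Σ_{i ≤ B transmitting in s} λ_{i,B+2} P_i)/N_{B+2} ) < r_{B+1}(p), provided r_{B+1}(p) > 0. -/
import Mathlib


/-- in the rSNR-degraded phase-fading HD-MRC, if node B+1
always listens under schedule p, then r_{B+2}(p) is at most the average rate
node B+2 would get from the nodes 1,...,B transmitting, which is strictly
below r_{B+1}(p), provided r_{B+1}(p) > 0. -/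
theorem stmt_11 {S : Type*} [Fintype S]
    (D B : ℕ) (hB1 : 1 ≤ B) (hBD : B + 2 ≤ D)
    (T : S → Finset ℕ) (hT : ∀ s, T s ⊆ Finset.Ioo 1 D)
    (lam : ℕ → ℕ → ℝ) (P N : ℕ → ℝ)
    (hlam : ∀ i k, 0 ≤ lam i k) (hP : ∀ i, 0 ≤ P i) (hN : ∀ k, 0 < N k)
    (hdeg : ∀ i j k, 1 ≤ i → i < j → j < k → k ≤ D →
      lam i k * P i / N k < lam i j * P i / N j)
    (p : S → ℝ) (hp0 : ∀ s, 0 ≤ p s) (hp1 : ∑ s, p s = 1)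
    (hlisten : ∀ s, (B + 1) ∈ T s → p s = 0)
    (Γ : ℝ → ℝ) (hΓ : Γ = fun x => Real.logb 2 (1 + x))
    (r : ℕ → ℝ)
    (hr : ∀ m, r m = ∑ s, (if m ∈ T s then 0 else
      p s * Γ ((∑ i ∈ insert 1 (T s ∩ Finset.Ico 2 m), lam i m * P i) / N m)))
    (hpos : 0 < r (B + 1)) :
    r (B + 2) ≤ (∑ s, p s *
        Γ ((∑ i ∈ insert 1 (T s ∩ Finset.Ico 2 (B + 1)),
            lam i (B + 2) * P i) / N (B + 2))) ∧
    (∑ s, p s *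
        Γ ((∑ i ∈ insert 1 (T s ∩ Finset.Ico 2 (B + 1)),
            lam i (B + 2) * P i) / N (B + 2))) < r (B + 1) := by
  subst hΓ
  -- basic facts
  have hsum0 : ∀ (s : S) (m : ℕ),
      0 ≤ (∑ i ∈ insert 1 (T s ∩ Finset.Ico 2 m), lam i m * P i) / N m := by
    intro s m
    apply div_nonneg _ (hN m).le
    exact Finset.sum_nonneg fun i _ => mul_nonneg (hlam i m) (hP i)
  have hΓ0 : ∀ x : ℝ, 0 ≤ x → 0 ≤ Real.logb 2 (1 + x) := by
    intro x hx
    exact Real.logb_nonneg one_lt_two (by linarith)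
  -- strict comparison of arguments
  have harg : ∀ s : S,
      (∑ i ∈ insert 1 (T s ∩ Finset.Ico 2 (B + 1)), lam i (B + 2) * P i) / N (B + 2)
      < (∑ i ∈ insert 1 (T s ∩ Finset.Ico 2 (B + 1)), lam i (B + 1) * P i) / N (B + 1) := by
    intro s
    rw [Finset.sum_div, Finset.sum_div]
    apply Finset.sum_lt_sum_of_nonempty ⟨1, Finset.mem_insert_self _ _⟩
    intro i hi
    have hib : 1 ≤ i ∧ i < B + 1 := by
      rcases Finset.mem_insert.mp hi with h | h
      · omega
      · rcases Finset.mem_inter.mp h with ⟨_, h2⟩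
        rcases Finset.mem_Ico.mp h2 with ⟨h3, h4⟩
        omega
    exact hdeg i (B + 1) (B + 2) hib.1 hib.2 (by omega) hBD
  have hΓlt : ∀ s : S,
      Real.logb 2 (1 + (∑ i ∈ insert 1 (T s ∩ Finset.Ico 2 (B + 1)), lam i (B + 2) * P i) / N (B + 2))
      < Real.logb 2 (1 + (∑ i ∈ insert 1 (T s ∩ Finset.Ico 2 (B + 1)), lam i (B + 1) * P i) / N (B + 1)) := by
    intro s
    apply Real.logb_lt_logb one_lt_two
    · have := hsum0 s (B + 2)
      have h2 : T s ∩ Finset.Ico 2 (B + 1) ⊆ T s ∩ Finset.Ico 2 (B + 2) := by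
        apply Finset.inter_subset_inter_left
        apply Finset.Ico_subset_Ico le_rfl (by omega)
      have h3 : 0 ≤ (∑ i ∈ insert 1 (T s ∩ Finset.Ico 2 (B + 1)), lam i (B + 2) * P i) / N (B + 2) := by
        apply div_nonneg _ (hN _).le
        exact Finset.sum_nonneg fun i _ => mul_nonneg (hlam _ _) (hP i)
      linarith
    · linarith [harg s]
  constructor
  · rw [hr]
    apply Finset.sum_le_sum
    intro s _
    by_cases hps : p s = 0
    · simp [hps]
    · have hB1s : (B + 1) ∉ T s := fun h => hps (hlisten s h)
      have hset : T s ∩ Finset.Ico 2 (B + 2) = T s ∩ Finset.Ico 2 (B + 1) := by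
        ext a
        simp only [Finset.mem_inter, Finset.mem_Ico]
        constructor
        · rintro ⟨ha, h2, h3⟩
          refine ⟨ha, h2, ?_⟩
          rcases Nat.lt_or_ge a (B + 1) with h | h
          · exact h
          · exfalso; have : a = B + 1 := by omega
            exact hB1s (this ▸ ha)
        · rintro ⟨ha, h2, h3⟩; exact ⟨ha, h2, by omega⟩
      rw [hset]
      split_ifs with h
      · exact mul_nonneg (hp0 s) (hΓ0 _ (by
          apply div_nonneg _ (hN _).le
          exact Finset.sum_nonneg fun i _ => mul_nonneg (hlam _ _) (hP i)))
      · exact le_refl _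
  · rw [hr]
    have hrw : ∀ s : S, (if (B + 1) ∈ T s then (0:ℝ) else
        p s * Real.logb 2 (1 + (∑ i ∈ insert 1 (T s ∩ Finset.Ico 2 (B + 1)), lam i (B + 1) * P i) / N (B + 1)))
        = p s * Real.logb 2 (1 + (∑ i ∈ insert 1 (T s ∩ Finset.Ico 2 (B + 1)), lam i (B + 1) * P i) / N (B + 1)) := by
      intro s
      split_ifs with h
      · rw [hlisten s h]; ring
      · rfl
    rw [Finset.sum_congr rfl fun s _ => hrw s]
    -- find a state with positive probability
    have hex : ∃ s : S, 0 < p s := by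
      by_contra hc
      push_neg at hc
      have : ∀ s : S, p s = 0 := fun s => le_antisymm (hc s) (hp0 s)
      have h0 : r (B + 1) = 0 := by
        rw [hr]
        apply Finset.sum_eq_zero
        intro s _
        rw [this s]
        split_ifs <;> ring
      linarith
    obtain ⟨s₀, hs₀⟩ := hex
    apply Finset.sum_lt_sum
    · intro s _
      exact mul_le_mul_of_nonneg_left (hΓlt s).le (hp0 s)
    · exact ⟨s₀, Finset.mem_univ s₀, mul_lt_mul_of_pos_left (hΓlt s₀) hs₀⟩
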